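/- arXiv:2404.08989 — 2 statements merged into one kernel-verified Lean document; each statement's English description precedes it below -/
import Mathlib

section
/- Let φ, ψ ∈ ℝ be such that 1, φ/(2π), ψ/(2π) are linearly independent over ℚ. Let (A, B) ∈ ℝ² with (A, B) ≠ (0, 0), let P and Q be real 2×2 matrices with det P ≠ 0 and det Q ≠ 0, and let D, E ∈ ℝ with D ≠ 0. Then for every σ ∈ {−1, 1}, the set of natural numbers k such that all four of the following hold is infinite: (i) σ·(A cos(kψ) − B sin(kψ)) > 0; (ii) σ·(A sin(kψ) + B cos(kψ)) > 0; (iii) S2(kφ)·E − S4(kφ)·D ≠ 0; (iv) S1(kφ)·E − S3(kφ)·D ≠ 0. -/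
open Real

lemma irr_of_li {x y : ℝ} (h : LinearIndependent ℚ ![(1:ℝ), x, y]) :
    Irrational x ∧ Irrational y := by
  rw [Fintype.linearIndependent_iff] at h
  constructor
  · rintro ⟨q, hq⟩
    have := h ![q, -1, 0] ?_ 1
    · norm_num at this
    · simp [Fin.sum_univ_three, Rat.smul_def, ← hq]
  · rintro ⟨q, hq⟩
    have := h ![q, 0, -1] ?_ 2
    · change (-1 : ℚ) = 0 at this; norm_num at this
    · simp [Fin.sum_univ_three, Rat.smul_def, ← hq]

lemma exists_small_step {α : ℝ} (hα : Irrational α) {ε : ℝ} (hε : 0 < ε) :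
    ∃ m : ℕ, 0 < m ∧ ∃ n : ℤ, ((m:ℝ) * α - n ≠ 0 ∧ |(m:ℝ) * α - n| < ε) := by
  set S : AddSubgroup ℝ :=
    { carrier := {x | ∃ a b : ℤ, x = a * α + b}
      zero_mem' := ⟨0, 0, by simp⟩
      add_mem' := by rintro x y ⟨a, b, rfl⟩ ⟨c, d, rfl⟩; exact ⟨a + c, b + d, by push_cast; ring⟩
      neg_mem' := by rintro x ⟨a, b, rfl⟩; exact ⟨-a, -b, by push_cast; ring⟩ } with hS
  rcases S.dense_or_cyclic with hd | ⟨a, ha⟩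
  · have hmin : 0 < min ε 1 := lt_min hε one_pos
    obtain ⟨g, hgS, hg1, hg2⟩ := hd.exists_mem_open (isOpen_Ioo (a := 0) (b := min ε 1))
      ⟨min ε 1 / 2, Set.mem_Ioo.mpr ⟨by linarith, by linarith⟩⟩
    obtain ⟨p, q, rfl⟩ := hgS
    have hgε : (p:ℝ) * α + q < ε := lt_of_lt_of_le hg2 (min_le_left _ _)
    rcases lt_trichotomy p 0 with hp | rfl | hp
    · have hcast : ((((-p).toNat : ℕ)):ℝ) = -(p:ℝ) := by
        have := Int.toNat_of_nonneg (by omega : (0:ℤ) ≤ -p)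
        exact_mod_cast congrArg (Int.cast : ℤ → ℝ) this
      refine ⟨(-p).toNat, by omega, q, ?_, ?_⟩
      · rw [hcast]; intro h; nlinarith
      · rw [hcast, show -(p:ℝ) * α - q = -((p:ℝ)*α + q) by ring, abs_neg,
          abs_of_pos hg1]; exact hgε
    · have hq1 : (q:ℝ) < 1 := lt_of_lt_of_le (by simpa using hg2) (min_le_right ε 1)
      have hq0 : (0:ℝ) < q := by simpa using hg1
      have : (1:ℤ) ≤ q := by exact_mod_cast hq0
      have : (1:ℝ) ≤ q := by exact_mod_cast this
      linarith
    · have hcast : (((p.toNat : ℕ)):ℝ) = (p:ℝ) := by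
        have := Int.toNat_of_nonneg (by omega : (0:ℤ) ≤ p)
        exact_mod_cast congrArg (Int.cast : ℤ → ℝ) this
      refine ⟨p.toNat, by omega, -q, ?_, ?_⟩
      · rw [hcast]; intro h; push_cast at h; nlinarith
      · rw [hcast, show (p:ℝ) * α - ((-q : ℤ):ℝ) = (p:ℝ)*α + q by push_cast; ring,
          abs_of_pos hg1]; exact hgε
  · have hαS : α ∈ S := ⟨1, 0, by push_cast; ring⟩
    have h1S : (1:ℝ) ∈ S := ⟨0, 1, by push_cast; ring⟩
    rw [ha, AddSubgroup.mem_closure_singleton] at hαS h1S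
    obtain ⟨p, hp⟩ := hαS
    obtain ⟨q, hq⟩ := h1S
    have hp' : (p:ℝ) * a = α := by rw [← hp]; simp [zsmul_eq_mul]
    have hq' : (q:ℝ) * a = 1 := by rw [← hq]; simp [zsmul_eq_mul]
    have hq0 : (q:ℝ) ≠ 0 := by intro h; rw [h] at hq'; simp at hq'
    refine absurd ⟨(p:ℚ)/q, ?_⟩ hα
    push_cast
    rw [div_eq_iff hq0]
    linear_combination (q:ℝ) * hp' - (p:ℝ) * hq'

lemma hit {δ' y : ℝ} (h0 : 0 < δ') {N : ℕ} (hy : ((N:ℝ)+1)*δ' ≤ y) :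
    ∃ j : ℕ, N < j ∧ 0 ≤ (j:ℝ)*δ' - y ∧ (j:ℝ)*δ' - y < δ' := by
  have hy0 : 0 < y := lt_of_lt_of_le (by positivity) hy
  have hdiv : ((N:ℝ)+1) ≤ y / δ' := (le_div_iff₀ h0).mpr hy
  have hc : ((N:ℝ)+1) ≤ (⌈y/δ'⌉ : ℝ) := le_trans hdiv (Int.le_ceil _)
  have hnn : (0:ℤ) ≤ ⌈y/δ'⌉ := by
    have : (0:ℝ) ≤ (⌈y/δ'⌉ : ℝ) := le_trans (by positivity) hc
    exact_mod_cast this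
  have hJ : (((⌈y/δ'⌉.toNat : ℕ)) : ℝ) = ((⌈y/δ'⌉ : ℤ) : ℝ) := by
    exact_mod_cast congrArg (Int.cast : ℤ → ℝ) (Int.toNat_of_nonneg hnn)
  refine ⟨(⌈y/δ'⌉).toNat, ?_, ?_, ?_⟩
  · have h2 : ((N:ℤ)+1) ≤ ⌈y/δ'⌉ := by exact_mod_cast hc
    omega
  · rw [hJ]
    have h1 : y / δ' ≤ ((⌈y/δ'⌉ : ℤ) : ℝ) := Int.le_ceil _
    nlinarith [(div_le_iff₀ h0).mp h1]
  · rw [hJ]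
    have h1 : ((⌈y/δ'⌉ : ℤ) : ℝ) < y / δ' + 1 := Int.ceil_lt_add_one _
    have h2 : y / δ' * δ' = y := div_mul_cancel₀ y (ne_of_gt h0)
    nlinarith

lemma key {α : ℝ} (hα : Irrational α) (x₀ : ℝ) {ε : ℝ} (hε : 0 < ε) :
    {k : ℕ | ∃ n : ℤ, |(k:ℝ) * α - x₀ - n| < ε}.Infinite := by
  obtain ⟨m, hm, n, hδ0, hδε⟩ := exists_small_step hα hε
  set δ := (m:ℝ) * α - n with hδ
  apply Set.infinite_of_forall_exists_gt
  intro N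
  rcases hδ0.lt_or_gt with hneg | hpos
  · -- δ < 0
    have h0 : 0 < -δ := neg_pos.mpr hneg
    set n' : ℤ := ⌈((N:ℝ)+1)*(-δ) + |x₀|⌉ with hn'
    have h1 : ((N:ℝ)+1)*(-δ) + |x₀| ≤ (n':ℝ) := by rw [hn']; exact Int.le_ceil _
    have hy : ((N:ℝ)+1)*(-δ) ≤ (n':ℝ) - x₀ := by
      have := le_abs_self x₀; linarith
    obtain ⟨j, hjN, hj0, hj1⟩ := hit h0 hy
    refine ⟨j * m, ⟨j * n - n', ?_⟩, lt_of_lt_of_le hjN (Nat.le_mul_of_pos_right j hm)⟩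
    have heq : ((j*m : ℕ):ℝ) * α - x₀ - ((j*n - n' : ℤ):ℝ)
        = -((j:ℝ)*(-δ) - ((n':ℝ) - x₀)) := by
      push_cast; rw [hδ]; ring
    rw [heq, abs_neg, abs_of_nonneg hj0]
    have : -δ < ε := lt_of_le_of_lt (neg_le_abs δ) hδε
    linarith
  · -- δ > 0
    set n' : ℤ := ⌈((N:ℝ)+1)*δ + |x₀|⌉ with hn'
    have h1 : ((N:ℝ)+1)*δ + |x₀| ≤ (n':ℝ) := by rw [hn']; exact Int.le_ceil _
    have hy : ((N:ℝ)+1)*δ ≤ x₀ + (n':ℝ) := by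
      have := neg_abs_le x₀; linarith
    obtain ⟨j, hjN, hj0, hj1⟩ := hit hpos hy
    refine ⟨j * m, ⟨n' + j * n, ?_⟩, lt_of_lt_of_le hjN (Nat.le_mul_of_pos_right j hm)⟩
    have heq : ((j*m : ℕ):ℝ) * α - x₀ - ((n' + j*n : ℤ):ℝ)
        = (j:ℝ)*δ - (x₀ + (n':ℝ)) := by
      push_cast; rw [hδ]; ring
    rw [heq, abs_of_nonneg hj0]
    have : δ < ε := lt_of_le_of_lt (le_abs_self δ) hδε
    linarith

lemma bad_subsingleton {φ : ℝ} (hφ : Irrational (φ / (2 * Real.pi))) {c d : ℝ}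
    (hcd : ¬(c = 0 ∧ d = 0)) :
    {k : ℕ | c * Real.cos ((k:ℝ) * φ) + d * Real.sin ((k:ℝ) * φ) = 0}.Subsingleton := by
  intro k₁ h₁ k₂ h₂
  by_contra hne
  simp only [Set.mem_setOf_eq] at h₁ h₂
  have hs : Real.sin ((k₂:ℝ) * φ - (k₁:ℝ) * φ) = 0 := by
    rw [Real.sin_sub]
    rcases not_and_or.mp hcd with hc | hd
    · have hc' : c ≠ 0 := hc
      have : c * (Real.sin ((k₂:ℝ)*φ) * Real.cos ((k₁:ℝ)*φ) -
          Real.cos ((k₂:ℝ)*φ) * Real.sin ((k₁:ℝ)*φ)) = 0 := by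
        linear_combination Real.sin ((k₂:ℝ)*φ) * h₁ - Real.sin ((k₁:ℝ)*φ) * h₂
      rcases mul_eq_zero.mp this with h | h
      · exact absurd h hc'
      · exact h
    · have hd' : d ≠ 0 := hd
      have : d * (Real.sin ((k₂:ℝ)*φ) * Real.cos ((k₁:ℝ)*φ) -
          Real.cos ((k₂:ℝ)*φ) * Real.sin ((k₁:ℝ)*φ)) = 0 := by
        linear_combination Real.cos ((k₁:ℝ)*φ) * h₂ - Real.cos ((k₂:ℝ)*φ) * h₁
      rcases mul_eq_zero.mp this with h | h
      · exact absurd h hd'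
      · exact h
  obtain ⟨j, hj⟩ := Real.sin_eq_zero_iff.mp hs
  have hm0 : ((k₂:ℤ) - (k₁:ℤ)) ≠ 0 := by
    intro h; apply hne; omega
  have hmR : (((k₂:ℤ) - (k₁:ℤ) : ℤ):ℝ) ≠ 0 := by exact_mod_cast hm0
  refine hφ ⟨(j:ℚ) / (2 * ((k₂:ℤ) - (k₁:ℤ) : ℤ)), ?_⟩
  have hmR' : ((k₂:ℝ) - (k₁:ℝ)) ≠ 0 := by push_cast at hmR; exact hmR
  push_cast
  rw [div_eq_div_iff (mul_ne_zero two_ne_zero hmR') Real.two_pi_pos.ne']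
  linear_combination 2 * hj
lemma coeff_ne {u v q₀ q₁ : ℝ} (huv : ¬(u = 0 ∧ v = 0)) (hq : ¬(q₀ = 0 ∧ q₁ = 0)) :
    ¬(u*q₀ + v*q₁ = 0 ∧ v*q₀ - u*q₁ = 0) := by
  rintro ⟨h1, h2⟩
  have hqq : q₀^2 + q₁^2 ≠ 0 := by
    rcases not_and_or.mp hq with h | h <;> intro h0 <;> apply h <;>
      nlinarith [sq_nonneg q₀, sq_nonneg q₁]
  have h3 : u * (q₀^2 + q₁^2) = 0 := by linear_combination q₀*h1 - q₁*h2
  have h4 : v * (q₀^2 + q₁^2) = 0 := by linear_combination q₁*h1 + q₀*h2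
  exact huv ⟨by rcases mul_eq_zero.mp h3 with h|h; exact h; exact absurd h hqq,
    by rcases mul_eq_zero.mp h4 with h|h; exact h; exact absurd h hqq⟩



/-- `S1(θ) = p₁₁(b₁₁ cos θ − b₂₁ sin θ) + p₁₂(b₁₁ sin θ + b₂₁ cos θ)`. -/
noncomputable def S1 (θ : ℝ) (P Q : Matrix (Fin 2) (Fin 2) ℝ) : ℝ :=
  P 0 0 * (Q 0 0 * Real.cos θ - Q 1 0 * Real.sin θ) +
  P 0 1 * (Q 0 0 * Real.sin θ + Q 1 0 * Real.cos θ)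

/-- `S2(θ) = p₁₁(b₁₂ cos θ − b₂₂ sin θ) + p₁₂(b₁₂ sin θ + b₂₂ cos θ)`. -/
noncomputable def S2 (θ : ℝ) (P Q : Matrix (Fin 2) (Fin 2) ℝ) : ℝ :=
  P 0 0 * (Q 0 1 * Real.cos θ - Q 1 1 * Real.sin θ) +
  P 0 1 * (Q 0 1 * Real.sin θ + Q 1 1 * Real.cos θ)

/-- `S3(θ) = p₂₁(b₁₁ cos θ − b₂₁ sin θ) + p₂₂(b₁₁ sin θ + b₂₁ cos θ)`. -/
noncomputable def S3 (θ : ℝ) (P Q : Matrix (Fin 2) (Fin 2) ℝ) : ℝ :=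
  P 1 0 * (Q 0 0 * Real.cos θ - Q 1 0 * Real.sin θ) +
  P 1 1 * (Q 0 0 * Real.sin θ + Q 1 0 * Real.cos θ)

/-- `S4(θ) = p₂₁(b₁₂ cos θ − b₂₂ sin θ) + p₂₂(b₁₂ sin θ + b₂₂ cos θ)`. -/
noncomputable def S4 (θ : ℝ) (P Q : Matrix (Fin 2) (Fin 2) ℝ) : ℝ :=
  P 1 0 * (Q 0 1 * Real.cos θ - Q 1 1 * Real.sin θ) +
  P 1 1 * (Q 0 1 * Real.sin θ + Q 1 1 * Real.cos θ)

theorem stmt_3 (φ ψ : ℝ)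
    (hind : LinearIndependent ℚ ![(1 : ℝ), φ / (2 * Real.pi), ψ / (2 * Real.pi)])
    (A B : ℝ) (hAB : (A, B) ≠ (0, 0))
    (P Q : Matrix (Fin 2) (Fin 2) ℝ) (hP : P.det ≠ 0) (hQ : Q.det ≠ 0)
    (D E : ℝ) (hD : D ≠ 0) (σ : ℝ) (hσ : σ = -1 ∨ σ = 1) :
    {k : ℕ |
      σ * (A * Real.cos (k * ψ) - B * Real.sin (k * ψ)) > 0 ∧
      σ * (A * Real.sin (k * ψ) + B * Real.cos (k * ψ)) > 0 ∧
      S2 (k * φ) P Q * E - S4 (k * φ) P Q * D ≠ 0 ∧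
      S1 (k * φ) P Q * E - S3 (k * φ) P Q * D ≠ 0}.Infinite := by
  obtain ⟨hφirr, hψirr⟩ := irr_of_li hind
  have hσ2 : σ * σ = 1 := by rcases hσ with rfl | rfl <;> norm_num
  have hσ0 : σ ≠ 0 := by rcases hσ with rfl | rfl <;> norm_num
  have hAB' : ¬(A = 0 ∧ B = 0) := by rintro ⟨rfl, rfl⟩; exact hAB rfl
  have hAB2 : 0 < A^2 + B^2 := by
    rcases not_and_or.mp hAB' with h | h <;> [positivity; positivity]
  -- the witness angle t₀
  set z : ℂ := ⟨σ*(A+B), σ*(A-B)⟩ with hz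
  have hz0 : z ≠ 0 := by
    intro h
    rw [Complex.ext_iff] at h
    obtain ⟨h1, h2⟩ := h
    simp only [hz, Complex.zero_re, Complex.zero_im] at h1 h2
    apply hAB'
    constructor <;> nlinarith
  have habs : 0 < ‖z‖ := norm_pos_iff.mpr hz0
  set t₀ : ℝ := Complex.arg z with ht₀
  have hcos : Real.cos t₀ = σ*(A+B) / ‖z‖ := by
    rw [ht₀, Complex.cos_arg hz0]
  have hsin : Real.sin t₀ = σ*(A-B) / ‖z‖ := by
    rw [ht₀, Complex.sin_arg]
  set V : Set ℝ := {t | 0 < σ * (A * Real.cos t - B * Real.sin t) ∧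
      0 < σ * (A * Real.sin t + B * Real.cos t)} with hV
  have hVopen : IsOpen V := by
    apply IsOpen.inter
    · exact isOpen_lt continuous_const
        (continuous_const.mul ((continuous_const.mul Real.continuous_cos).sub
          (continuous_const.mul Real.continuous_sin)))
    · exact isOpen_lt continuous_const
        (continuous_const.mul ((continuous_const.mul Real.continuous_sin).add
          (continuous_const.mul Real.continuous_cos)))
  have ht₀V : t₀ ∈ V := by
    constructor
    · rw [hcos, hsin]
      have : σ * (A * (σ*(A+B) / ‖z‖) - B * (σ*(A-B) / ‖z‖))
          = (σ*σ) * ((A^2+B^2) / ‖z‖) := by field_simp; ring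
      rw [this, hσ2, one_mul]; exact div_pos hAB2 habs
    · rw [hcos, hsin]
      have : σ * (A * (σ*(A-B) / ‖z‖) + B * (σ*(A+B) / ‖z‖))
          = (σ*σ) * ((A^2+B^2) / ‖z‖) := by field_simp; ring
      rw [this, hσ2, one_mul]; exact div_pos hAB2 habs
  obtain ⟨ε, hε, hball⟩ := Metric.isOpen_iff.mp hVopen t₀ ht₀V
  -- the key infinite set
  have hkey := key hψirr (t₀ / (2*π)) (ε := ε / (2*π)) (by positivity)
  -- bad sets
  set u : ℝ := P 0 0 * E - P 1 0 * D with hu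
  set v : ℝ := P 0 1 * E - P 1 1 * D with hv
  have huv : ¬(u = 0 ∧ v = 0) := by
    rintro ⟨h1, h2⟩
    apply hP
    rw [Matrix.det_fin_two]
    rw [hu] at h1; rw [hv] at h2
    have : (P 0 0 * P 1 1 - P 0 1 * P 1 0) * D = 0 := by
      linear_combination P 0 1 * h1 - P 0 0 * h2
    rcases mul_eq_zero.mp this with h | h
    · exact h
    · exact absurd h hD
  have hQ1 : ¬(Q 0 1 = 0 ∧ Q 1 1 = 0) := by
    rintro ⟨h1, h2⟩; apply hQ; rw [Matrix.det_fin_two, h1, h2]; ring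
  have hQ0 : ¬(Q 0 0 = 0 ∧ Q 1 0 = 0) := by
    rintro ⟨h1, h2⟩; apply hQ; rw [Matrix.det_fin_two, h1, h2]; ring
  have hbad2 := bad_subsingleton hφirr (coeff_ne huv hQ1)
  have hbad1 := bad_subsingleton hφirr (coeff_ne huv hQ0)
  have hexp2 : ∀ t : ℝ, S2 t P Q * E - S4 t P Q * D
      = (u * Q 0 1 + v * Q 1 1) * Real.cos t + (v * Q 0 1 - u * Q 1 1) * Real.sin t := by
    intro t; rw [hu, hv]; simp only [S2, S4]; ring
  have hexp1 : ∀ t : ℝ, S1 t P Q * E - S3 t P Q * D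
      = (u * Q 0 0 + v * Q 1 0) * Real.cos t + (v * Q 0 0 - u * Q 1 0) * Real.sin t := by
    intro t; rw [hu, hv]; simp only [S1, S3]; ring
  refine ((hkey.diff ((hbad2.finite.union hbad1.finite))).mono ?_)
  rintro k ⟨⟨n, hn⟩, hkbad⟩
  simp only [Set.mem_union, Set.mem_setOf_eq, not_or] at hkbad
  obtain ⟨hkb2, hkb1⟩ := hkbad
  have h2π : (0:ℝ) < 2*π := Real.two_pi_pos
  -- conditions (i) and (ii)
  set t : ℝ := (k:ℝ)*ψ - (n:ℝ)*(2*π) with ht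
  have htt : |t - t₀| < ε := by
    have heq : ((k:ℝ) * (ψ/(2*π)) - t₀/(2*π) - n) * (2*π) = t - t₀ := by
      rw [ht]; field_simp; ring
    calc |t - t₀| = |(k:ℝ) * (ψ/(2*π)) - t₀/(2*π) - n| * |2*π| := by
          rw [← abs_mul, heq]
      _ < (ε/(2*π)) * (2*π) := by
          rw [abs_of_pos h2π]
          exact mul_lt_mul_of_pos_right hn h2π
      _ = ε := by field_simp
  have htV : t ∈ V := hball (by rwa [Metric.mem_ball, Real.dist_eq])
  have hkψ : (k:ℝ)*ψ = t + (n:ℝ)*(2*π) := by rw [ht]; ring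
  have hcosk : Real.cos ((k:ℝ)*ψ) = Real.cos t := by
    rw [hkψ, Real.cos_add_int_mul_two_pi]
  have hsink : Real.sin ((k:ℝ)*ψ) = Real.sin t := by
    rw [hkψ, Real.sin_add_int_mul_two_pi]
  obtain ⟨hV1, hV2⟩ := htV
  refine ⟨by rw [hcosk, hsink]; exact hV1, by rw [hcosk, hsink]; exact hV2, ?_, ?_⟩
  · rw [hexp2]; exact hkb2
  · rw [hexp1]; exact hkb1
end

section
/- Let n, m ∈ ℕ with m ≤ n + 1, and let S1, S2, S3, S4, A, B, D, E ∈ ℝ satisfy: A > 0, B > 0, D ≠ 0, S1·S4 − S2·S3 ≠ 0, S2·E − S4·D ≠ 0, and S1·E − S3·D ≠ 0. Then there exist σ ∈ {−1, 1} and real numbers M ≠ 0 and N ≠ 0 such that M^{n+2−m}·N^{m+1}·D + σ·S1·N·A + σ·S2·M·B = 0 and M^{n+2−m}·N^{m+1}·E + σ·S3·N·A + σ·S4·M·B = 0. -/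
theorem stmt_4 (n m : ℕ) (hm : m ≤ n + 1)
    (S1 S2 S3 S4 A B D E : ℝ)
    (hA : A > 0) (hB : B > 0) (hD : D ≠ 0)
    (hdet : S1 * S4 - S2 * S3 ≠ 0)
    (h2 : S2 * E - S4 * D ≠ 0) (h1 : S1 * E - S3 * D ≠ 0) :
    ∃ σ M N : ℝ, (σ = -1 ∨ σ = 1) ∧ M ≠ 0 ∧ N ≠ 0 ∧
      M ^ (n + 2 - m) * N ^ (m + 1) * D + σ * S1 * N * A + σ * S2 * M * B = 0 ∧
      M ^ (n + 2 - m) * N ^ (m + 1) * E + σ * S3 * N * A + σ * S4 * M * B = 0 := by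
  have hA' : A ≠ 0 := hA.ne'
  have hB' : B ≠ 0 := hB.ne'
  set c : ℝ := -((S2 * E - S4 * D) * B) / ((S1 * E - S3 * D) * A) with hc_def
  have hc : c ≠ 0 := by
    apply div_ne_zero
    · exact neg_ne_zero.mpr (mul_ne_zero h2 hB')
    · exact mul_ne_zero h1 hA'
  set K : ℝ := c * S1 * A + S2 * B with hK_def
  set K2 : ℝ := c * S3 * A + S4 * B with hK2_def
  have hKval : K = B * D * (S1 * S4 - S2 * S3) / (S1 * E - S3 * D) := by
    rw [hK_def, hc_def]; field_simp [sub_ne_zero.mpr (show E * S1 ≠ D * S3 from fun h => h1 (by linarith))]; ring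
  have hK2val : K2 = B * E * (S1 * S4 - S2 * S3) / (S1 * E - S3 * D) := by
    rw [hK2_def, hc_def]; field_simp [sub_ne_zero.mpr (show E * S1 ≠ D * S3 from fun h => h1 (by linarith))]; ring
  have hK : K ≠ 0 := by
    rw [hKval]
    exact div_ne_zero (mul_ne_zero (mul_ne_zero hB' hD) hdet) h1
  have hKE : K2 * D = K * E := by
    rw [hKval, hK2val]; field_simp
  set R : ℝ := K / (c ^ (m + 1) * D) with hR_def
  have hR : R ≠ 0 := div_ne_zero hK (mul_ne_zero (pow_ne_zero _ hc) hD)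
  set σ : ℝ := if 0 < R then -1 else 1 with hσ_def
  have hσ : σ = -1 ∨ σ = 1 := by
    rw [hσ_def]; split <;> simp
  have hpos : 0 < -σ * R := by
    rw [hσ_def]
    split_ifs with h
    · simp only [neg_neg, one_mul]; exact h
    · push_neg at h
      have : R < 0 := lt_of_le_of_ne h hR
      linarith
  set M : ℝ := (-σ * R) ^ ((n + 2 : ℝ)⁻¹) with hM_def
  have hM : 0 < M := Real.rpow_pos_of_pos hpos _
  have hMpow : M ^ (n + 2) = -σ * R := by
    rw [hM_def, ← Real.rpow_natCast ((-σ * R) ^ ((n + 2 : ℝ)⁻¹)) (n + 2),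
      ← Real.rpow_mul hpos.le]
    push_cast
    rw [inv_mul_cancel₀ (by positivity), Real.rpow_one]
  clear_value c K K2 R σ M
  have hsplit : M ^ (n + 2 - m) * (c * M) ^ (m + 1) = c ^ (m + 1) * (M ^ (n + 2) * M) := by
    rw [mul_pow, ← mul_assoc, mul_comm (M ^ (n + 2 - m)), mul_assoc, ← pow_add, ← pow_succ]
    congr 2
    omega
  rw [hK_def] at hKE
  rw [hK2_def] at hKE
  refine ⟨σ, M, c * M, hσ, hM.ne', mul_ne_zero hc hM.ne', ?_, ?_⟩
  · rw [hsplit, hMpow, hR_def, hK_def]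
    field_simp
    first
    | linear_combination (σ * M * c ^ (m + 1)) * hKE
    | linear_combination (-(σ * M * c ^ (m + 1))) * hKE
    | ring
  · rw [hsplit, hMpow, hR_def, hK_def]
    field_simp
    linear_combination (σ * M) * hKE
end
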